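/- Let n be a positive integer, let w be symmetric nonnegative weights on {1,…,n}, let p ≥ 2, and let Δ_p be the associated graph p-Laplacian. Let f : ℝ → ℝⁿ be any forcing term, and suppose u, v : ℝ → ℝⁿ are differentiable and both satisfy the evolution equation x′(t) = −Δ_p x(t) + f(t) for all t ≥ 0. Then the nonlinear semigroup generated by Δ_p is a contraction: the map t ↦ ‖u(t) − v(t)‖ is nonincreasing on [0, ∞); in particular, if u(0) = v(0) then u(t) = v(t) for all t ≥ 0. -/

import Mathlib

open Real Finset
open scoped RealInnerProductSpace

/-- The graph `p`-Laplacian on a weighted graph with `n` nodes: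
`(Δ_p u)_i = Σ_j w i j * |u_i - u_j|^(p-2) (u_i - u_j)`, where the real power is `rpow`
(so that `|x|^(p-2) x = 0` when `x = 0`, for any `p`). -/
noncomputable def graphPLap {n : ℕ} (w : Fin n → Fin n → ℝ) (p : ℝ)
    (u : EuclideanSpace ℝ (Fin n)) : EuclideanSpace ℝ (Fin n) :=
  WithLp.toLp 2 (fun i => ∑ j, w i j * (|u i - u j| ^ (p - 2) * (u i - u j)))

lemma phi_nn_mono {p : ℝ} (hp : 2 ≤ p) {x y : ℝ} (hx : 0 ≤ x) (hxy : x ≤ y) :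
    x ^ (p - 2) * x ≤ y ^ (p - 2) * y := by
  rcases eq_or_lt_of_le hx with h0 | h0
  · rw [← h0]
    simp only [mul_zero]
    exact mul_nonneg (Real.rpow_nonneg (le_trans hx hxy) _) (le_trans hx hxy)
  · have hy : 0 < y := lt_of_lt_of_le h0 hxy
    have hx1 : x ^ (p - 2) * x = x ^ (p - 1) := by
      rw [show p - 1 = p - 2 + 1 by ring, Real.rpow_add_one (ne_of_gt h0)]
    have hy1 : y ^ (p - 2) * y = y ^ (p - 1) := by
      rw [show p - 1 = p - 2 + 1 by ring, Real.rpow_add_one (ne_of_gt hy)]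
    rw [hx1, hy1]
    exact Real.rpow_le_rpow hx hxy (by linarith)

lemma phi_mono {p : ℝ} (hp : 2 ≤ p) : Monotone (fun x : ℝ => |x| ^ (p - 2) * x) := by
  intro a b hab
  simp only
  rcases le_or_gt 0 a with ha | ha
  · rw [abs_of_nonneg ha, abs_of_nonneg (le_trans ha hab)]
    exact phi_nn_mono hp ha hab
  · rcases le_or_gt 0 b with hb | hb
    · have h1 : |a| ^ (p - 2) * a ≤ 0 :=
        mul_nonpos_of_nonneg_of_nonpos (Real.rpow_nonneg (abs_nonneg a) _) ha.le
      have h2 : 0 ≤ |b| ^ (p - 2) * b :=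
        mul_nonneg (Real.rpow_nonneg (abs_nonneg b) _) hb
      linarith
    · rw [abs_of_neg ha, abs_of_neg hb]
      have := phi_nn_mono hp (by linarith : (0:ℝ) ≤ -b) (by linarith : -b ≤ -a)
      nlinarith [this]

lemma phi_odd {p : ℝ} (x : ℝ) : |(-x)| ^ (p - 2) * (-x) = -(|x| ^ (p - 2) * x) := by
  rw [abs_neg]; ring

lemma phi_prod_nonneg {p : ℝ} (hp : 2 ≤ p) (a b : ℝ) :
    0 ≤ (|a| ^ (p - 2) * a - |b| ^ (p - 2) * b) * (a - b) := by
  rcases le_total a b with h | h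
  · have h2 : |a| ^ (p - 2) * a ≤ |b| ^ (p - 2) * b := phi_mono hp h
    nlinarith [h2]
  · have h2 : |b| ^ (p - 2) * b ≤ |a| ^ (p - 2) * a := phi_mono hp h
    nlinarith [h2]

lemma graphPLap_monotone {n : ℕ} (w : Fin n → Fin n → ℝ)
    (hsym : ∀ i j, w i j = w j i) (hw : ∀ i j, 0 ≤ w i j) (p : ℝ) (hp : 2 ≤ p)
    (a b : EuclideanSpace ℝ (Fin n)) :
    0 ≤ ∑ i, (graphPLap w p a i - graphPLap w p b i) * (a i - b i) := by
  set φ : ℝ → ℝ := fun x => |x| ^ (p - 2) * x with hφ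
  have hS : ∑ i, (graphPLap w p a i - graphPLap w p b i) * (a i - b i)
      = ∑ i, ∑ j, w i j * (φ (a i - a j) - φ (b i - b j)) * (a i - b i) := by
    refine Finset.sum_congr rfl fun i _ => ?_
    rw [graphPLap, graphPLap, PiLp.toLp_apply, PiLp.toLp_apply, ← Finset.sum_sub_distrib, Finset.sum_mul]
    refine Finset.sum_congr rfl fun j _ => ?_
    simp only [hφ]; ring
  rw [hS]
  set F : Fin n → Fin n → ℝ := fun i j => w i j * (φ (a i - a j) - φ (b i - b j)) * (a i - b i)
    with hF
  have key : ∀ i j, F i j + F j i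
      = w i j * ((φ (a i - a j) - φ (b i - b j)) * ((a i - a j) - (b i - b j))) := by
    intro i j
    have h1 : a j - a i = -(a i - a j) := by ring
    have h2 : b j - b i = -(b i - b j) := by ring
    have ho1 : φ (a j - a i) = -φ (a i - a j) := by rw [h1]; exact phi_odd _
    have ho2 : φ (b j - b i) = -φ (b i - b j) := by rw [h2]; exact phi_odd _
    simp only [hF, ho1, ho2, hsym j i]
    ring
  have h2S : (∑ i, ∑ j, F i j) + (∑ i, ∑ j, F i j)
      = ∑ i, ∑ j, w i j * ((φ (a i - a j) - φ (b i - b j)) * ((a i - a j) - (b i - b j))) := by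
    conv_lhs => rw [show (∑ i, ∑ j, F i j) + (∑ i, ∑ j, F i j)
      = (∑ i, ∑ j, F i j) + (∑ j, ∑ i, F i j) by rw [Finset.sum_comm]]
    rw [← Finset.sum_add_distrib]
    refine Finset.sum_congr rfl fun i _ => ?_
    rw [← Finset.sum_add_distrib]
    exact Finset.sum_congr rfl fun j _ => key i j
  have hpos : 0 ≤ ∑ i, ∑ j, w i j * ((φ (a i - a j) - φ (b i - b j)) * ((a i - a j) - (b i - b j))) := by
    refine Finset.sum_nonneg fun i _ => Finset.sum_nonneg fun j _ => ?_
    exact mul_nonneg (hw i j) (phi_prod_nonneg hp _ _)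
  linarith [h2S, hpos]

/-- Contraction of the nonlinear semigroup generated by Δ_p: two solutions of the
same forced equation approach each other; in particular solutions are unique. -/
theorem graphPLap_semigroup_contraction {n : ℕ} (hn : 0 < n)
    (w : Fin n → Fin n → ℝ)
    (hsym : ∀ i j, w i j = w j i) (hw : ∀ i j, 0 ≤ w i j) (p : ℝ) (hp : 2 ≤ p)
    (f : ℝ → EuclideanSpace ℝ (Fin n))
    (u v : ℝ → EuclideanSpace ℝ (Fin n))
    (hu : ∀ t : ℝ, 0 ≤ t → HasDerivAt u (-(graphPLap w p (u t)) + f t) t)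
    (hv : ∀ t : ℝ, 0 ≤ t → HasDerivAt v (-(graphPLap w p (v t)) + f t) t) :
    AntitoneOn (fun t => ‖u t - v t‖) (Set.Ici 0) ∧
      (u 0 = v 0 → ∀ t : ℝ, 0 ≤ t → u t = v t) := by
  set d : ℝ → EuclideanSpace ℝ (Fin n) := fun t => u t - v t with hd
  set g : ℝ → ℝ := fun t => ⟪d t, d t⟫ with hg
  have hderiv : ∀ t : ℝ, 0 ≤ t →
      HasDerivAt g (⟪d t, -(graphPLap w p (u t)) + graphPLap w p (v t)⟫
        + ⟪-(graphPLap w p (u t)) + graphPLap w p (v t), d t⟫) t := by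
    intro t ht
    have hdd : HasDerivAt d (-(graphPLap w p (u t)) + graphPLap w p (v t)) t := by
      have := (hu t ht).sub (hv t ht)
      exact this.congr_deriv (by abel)
    exact hdd.inner ℝ hdd
  have hinner_nonpos : ∀ t : ℝ, 0 ≤ t →
      ⟪d t, -(graphPLap w p (u t)) + graphPLap w p (v t)⟫ ≤ 0 := by
    intro t ht
    have := graphPLap_monotone w hsym hw p hp (u t) (v t)
    have hinner : ⟪d t, -(graphPLap w p (u t)) + graphPLap w p (v t)⟫
        = -∑ i, (graphPLap w p (u t) i - graphPLap w p (v t) i) * (u t i - v t i) := by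
      rw [PiLp.inner_apply, ← Finset.sum_neg_distrib]
      refine Finset.sum_congr rfl fun i _ => ?_
      simp only [hd, PiLp.sub_apply, PiLp.add_apply, PiLp.neg_apply, RCLike.inner_apply,
        conj_trivial]
      ring
    rw [hinner]
    linarith
  have hganti : AntitoneOn g (Set.Ici 0) := by
    have hdiff : ∀ t ∈ Set.Ici (0:ℝ), DifferentiableAt ℝ g t := fun t ht => (hderiv t ht).differentiableAt
    refine antitoneOn_of_deriv_nonpos (convex_Ici 0) ?_ ?_ ?_
    · exact fun t ht => (hdiff t ht).continuousAt.continuousWithinAt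
    · intro t ht
      rw [interior_Ici] at ht
      exact (hdiff t (Set.mem_Ici.mpr (le_of_lt ht))).differentiableWithinAt
    · intro t ht
      rw [interior_Ici] at ht
      rw [(hderiv t ht.le).deriv]
      have h1 := hinner_nonpos t ht.le
      have h2 : ⟪-(graphPLap w p (u t)) + graphPLap w p (v t), d t⟫
          = ⟪d t, -(graphPLap w p (u t)) + graphPLap w p (v t)⟫ := real_inner_comm _ _
      linarith [h1, h2.le, h2.ge]
  have hnorm : ∀ t, g t = ‖d t‖ ^ 2 := fun t => (real_inner_self_eq_norm_sq (d t)).symm ▸ rfl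
  have hanti : AntitoneOn (fun t => ‖u t - v t‖) (Set.Ici 0) := by
    intro s hs t ht hst
    have := hganti hs ht hst
    rw [hnorm, hnorm] at this
    have h1 : (0:ℝ) ≤ ‖d s‖ := norm_nonneg _
    nlinarith [norm_nonneg (d t)]
  refine ⟨hanti, fun h0 t ht => ?_⟩
  have := hanti (Set.self_mem_Ici) ht ht
  have h0' : ‖u 0 - v 0‖ = 0 := by rw [h0]; simp
  have : ‖u t - v t‖ = 0 := le_antisymm (by simpa [h0'] using this) (norm_nonneg _)
  have := norm_eq_zero.mp this
  exact sub_eq_zero.mp this
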